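/- Let Û⁴(x) = e^{−4t} + e^{−2t}√((8/3)(α + q²/2))/|x| + α/|x|² + e^{2t}√((8/3)(α + q²/2))(α − q²)/(6|x|³) + e^{4t}(α − q²)²/(36|x|⁴) and Ũ²(x) = e^{−2t} + √(4e^{−4t}ρ² + q²)/|x| + e^{−2t}ρ²/|x|², where ρ = r(t) > 0, t ∈ ℝ, q ∈ ℝ. If α ≥ q² + 6 e^{−4t} ρ², then Û(x) ≥ Ũ(x) for all |x| ≥ ρ. -/

import Mathlib

set_option maxHeartbeats 800000


/-- Comparison of the explicit radial conformal factors `Û` and `Ũ` in the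
exhaustion argument: if `α ≥ q² + 6 e^{-4t} ρ²`, then `Û ≥ Ũ` for `|x| ≥ ρ`. -/
theorem uhat_ge_utilde (t q ρ α : ℝ) (hρ : 0 < ρ)
    (hα : q^2 + 6 * Real.exp (-4*t) * ρ^2 ≤ α) :
    ∀ s : ℝ, ρ ≤ s →
      Real.sqrt (Real.exp (-2*t) + Real.sqrt (4 * Real.exp (-4*t) * ρ^2 + q^2) / s
          + Real.exp (-2*t) * ρ^2 / s^2)
        ≤ (Real.exp (-4*t)
            + Real.exp (-2*t) * Real.sqrt ((8/3) * (α + q^2/2)) / s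
            + α / s^2
            + Real.exp (2*t) * Real.sqrt ((8/3) * (α + q^2/2)) * (α - q^2) / (6 * s^3)
            + Real.exp (4*t) * (α - q^2)^2 / (36 * s^4)) ^ ((1:ℝ)/4) := by
  intro s hs
  have hs0 : 0 < s := hρ.trans_le hs
  have e4 : Real.exp (-4*t) = Real.exp (-2*t)^2 := by
    rw [sq, ← Real.exp_add]; ring_nf
  have e4' : Real.exp (4*t) = Real.exp (2*t)^2 := by
    rw [sq, ← Real.exp_add]; ring_nf
  rw [e4] at hα ⊢
  rw [e4']
  set a := Real.exp (-2*t) with ha_def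
  set b := Real.exp (2*t) with hb_def
  have ha : 0 < a := Real.exp_pos _
  have hb : 0 < b := Real.exp_pos _
  have hab : a * b = 1 := by
    rw [ha_def, hb_def, ← Real.exp_add]; ring_nf; exact Real.exp_zero
  set S := Real.sqrt (4 * a^2 * ρ^2 + q^2) with hS_def
  set T := Real.sqrt ((8/3) * (α + q^2/2)) with hT_def
  have hS0 : 0 ≤ S := Real.sqrt_nonneg _
  have hT0 : 0 ≤ T := Real.sqrt_nonneg _
  have hS2 : S^2 = 4 * a^2 * ρ^2 + q^2 := Real.sq_sqrt (by positivity)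
  have hα0 : 0 ≤ α := le_trans (by positivity) hα
  have hT2 : T^2 = (8/3) * (α + q^2/2) := Real.sq_sqrt (by nlinarith [sq_nonneg q])
  have h2ST : 2 * S ≤ T := by
    nlinarith [hS2, hT2, hS0, hT0, hα, sq_nonneg (T - 2*S), sq_nonneg (T + 2*S)]
  have hαq : 6 * a^2 * ρ^2 ≤ α - q^2 := by nlinarith [hα]
  have hαq0 : (0:ℝ) ≤ α - q^2 := le_trans (by positivity) hαq
  -- coefficient inequalities
  have h3 : a^2 * b = a := by
    rw [pow_two, mul_assoc, hab, mul_one]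
  have c3 : 0 ≤ b * T * (α - q^2) / 6 - 2 * a * ρ^2 * S := by
    have hint1 : 0 ≤ b * (T - 2*S) * (α - q^2) :=
      mul_nonneg (mul_nonneg hb.le (by linarith)) hαq0
    have hint2 : 0 ≤ b * S * ((α - q^2) - 6 * a^2 * ρ^2) :=
      mul_nonneg (mul_nonneg hb.le hS0) (by linarith)
    have h3' : a^2 * b * S * ρ^2 = a * S * ρ^2 := by rw [h3]
    nlinarith [hint1, hint2, h3']
  have c4 : 0 ≤ b^2 * (α - q^2)^2 / 36 - a^2 * ρ^4 := by
    have hsq : 36 * (a^2*ρ^2)^2 ≤ (α - q^2)^2 := by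
      nlinarith [mul_nonneg (sub_nonneg.2 hαq) (by positivity : (0:ℝ) ≤ α - q^2 + 6*a^2*ρ^2)]
    have hint : 0 ≤ b^2 * ((α - q^2)^2 - 36 * (a^2*ρ^2)^2) :=
      mul_nonneg (by positivity) (by linarith)
    have h4 : a^4 * b^2 * ρ^4 = a^2 * ρ^4 := by
      have h : a^4 * b^2 = a^2 := by
        calc a^4 * b^2 = (a*b)^2 * a^2 := by ring
          _ = a^2 := by rw [hab]; ring
      rw [h]
    nlinarith [hint, h4]
  -- polynomial inequality (denominators cleared)
  have hpoly : (a*s^2 + S*s + a*ρ^2)^2 ≤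
      a^2*s^4 + a*T*s^3 + α*s^2 + b*T*(α-q^2)*s/6 + b^2*(α-q^2)^2/36 := by
    have k1 : 0 ≤ (T - 2*S) * a * s^3 :=
      mul_nonneg (mul_nonneg (by linarith) ha.le) (by positivity)
    have k2 : 0 ≤ (α - q^2 - 6*a^2*ρ^2) * s^2 :=
      mul_nonneg (by linarith) (by positivity)
    have k3 : 0 ≤ (b * T * (α - q^2) / 6 - 2 * a * ρ^2 * S) * s :=
      mul_nonneg c3 hs0.le
    nlinarith [k1, k2, k3, c4, hS2]
  -- divide by s^4
  set A : ℝ := a + S/s + a*ρ^2/s^2 with hA_def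
  set B : ℝ := a^2 + a*T/s + α/s^2 + b*T*(α-q^2)/(6*s^3) + b^2*(α-q^2)^2/(36*s^4) with hB_def
  have key : A^2 ≤ B := by
    have h4 : (0:ℝ) < s^4 := by positivity
    have eA : A^2 = (a*s^2 + S*s + a*ρ^2)^2 / s^4 := by
      rw [hA_def]; field_simp
    have eB : B = (a^2*s^4 + a*T*s^3 + α*s^2 + b*T*(α-q^2)*s/6 + b^2*(α-q^2)^2/36) / s^4 := by
      rw [hB_def]; field_simp
    rw [eA, eB]
    exact (div_le_div_iff_of_pos_right h4).mpr hpoly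
  have hA0 : 0 ≤ A := by
    rw [hA_def]
    have : 0 ≤ S/s := div_nonneg hS0 hs0.le
    have : 0 ≤ a*ρ^2/s^2 := by positivity
    positivity
  calc Real.sqrt A = (A^2) ^ ((1:ℝ)/4) := by
        rw [← Real.rpow_natCast A 2, ← Real.rpow_mul hA0, Real.sqrt_eq_rpow]
        norm_num
    _ ≤ B ^ ((1:ℝ)/4) := Real.rpow_le_rpow (sq_nonneg A) key (by norm_num)
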